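/- Let X be a quasi-category and f : Δ¹ → X a 1-simplex. Then f is a quasi-isomorphism if and only if the image of f in the homotopy category π₀𝔠(X) is an isomorphism. -/

import Mathlib

open CategoryTheory Simplicial Opposite Limits MonoidalCategory

namespace Paper

/-- The 0-coskeleton `E S` of a set `S`: the simplicial set with
`(E S)_n = S^{n+1}`, i.e. the nerve of the groupoid with object set `S`
and exactly one morphism between each ordered pair of objects. -/
def E (S : Type) : SSet where
  obj m := Fin (m.unop.len + 1) → S
  map f := TypeCat.ofHom (fun α => α ∘ f.unop.toOrderHom)

/-- The constant map `X ⟶ E S` at a point `s : S`.  For `X = Δ[0]` this is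
the inclusion of the vertex `s` into `E S`. -/
def constE (X : SSet) {S : Type} (s : S) : X ⟶ E S where
  app m := TypeCat.ofHom (fun _ => fun _ => s)

/-- The constant map `X ⟶ Δ[n]` at the vertex `i`.  For `n = 0` this is the
canonical map `X ⟶ Δ[0]` to the terminal simplicial set. -/
def constSimplex (X : SSet) (n : ℕ) (i : Fin (n + 1)) : X ⟶ Δ[n] where
  app m := TypeCat.ofHom (fun _ => SSet.stdSimplex.objEquiv.symm (SimplexCategory.const m.unop ⦋n⦌ i))
  naturality _ _ _ := rfl

/-- The edge inclusion `Δ[1] ⟶ E (Fin 2)`, i.e. the nondegenerate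
1-simplex of `E¹` from the vertex `0` to the vertex `1`. -/
def edgeE : Δ[1] ⟶ E (Fin 2) where
  app m := TypeCat.ofHom (fun α => fun i => SSet.stdSimplex.asOrderHom α i)

/-- A map of simplicial sets is an inner fibration if it has the right lifting
property with respect to all inner horn inclusions `Λ[n, i] ⟶ Δ[n]`, `0 < i < n`. -/
def InnerFibration {X Y : SSet} (p : X ⟶ Y) : Prop :=
  ∀ (n : ℕ) (i : Fin (n + 1)), 0 < i → i < Fin.last n →
    HasLiftingProperty (Λ[n, i]).ι p

/-- A 1-simplex `f` of a simplicial set `X`, with `d₁ f = a` and `d₀ f = b`,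
is a quasi-isomorphism if there are a 1-simplex `g` with `d₁ g = b`, `d₀ g = a`
and 2-simplices `σ`, `τ` with `d₂ σ = f`, `d₀ σ = g`, `d₁ σ = s₀ a` and
`d₂ τ = g`, `d₀ τ = f`, `d₁ τ = s₀ b`. -/
def IsQuasiIso {X : SSet} (f : X _⦋1⦌) : Prop :=
  ∃ (g : X _⦋1⦌) (σ τ : X _⦋2⦌),
    X.δ 1 g = X.δ 0 f ∧ X.δ 0 g = X.δ 1 f ∧
    X.δ 2 σ = f ∧ X.δ 0 σ = g ∧ X.δ 1 σ = X.σ 0 (X.δ 1 f) ∧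
    X.δ 2 τ = g ∧ X.δ 0 τ = f ∧ X.δ 1 τ = X.σ 0 (X.δ 0 f)

/-- The pushout-product `f □ g : (A × D) ∪_{A × C} (B × C) ⟶ B × D`
of two maps `f : A ⟶ B` and `g : C ⟶ D` of simplicial sets. -/
noncomputable def pushoutProd {A B C D : SSet.{u_1}} (f : A ⟶ B) (g : C ⟶ D) :
    pushout (f ▷ C) (A ◁ g) ⟶ B ⊗ D :=
  pushout.desc (B ◁ g) (f ▷ D) (whisker_exchange f g).symm

/-- The inclusion `A ⟶ A × E¹` at the vertex `s` of `E¹ = E (Fin 2)`. -/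
noncomputable def incE1 (A : SSet) (s : Fin 2) : A ⟶ A ⊗ E (Fin 2) :=
  CartesianMonoidalCategory.lift (𝟙 A) (constE A s)

/-- Two maps `f g : A ⟶ Z` are `E¹`-homotopic if there is a homotopy
`H : A × E¹ ⟶ Z` restricting to `f` on `A × {0}` and to `g` on `A × {1}`. -/
def E1Homotopic {A Z : SSet} (f g : A ⟶ Z) : Prop :=
  ∃ H : A ⊗ E (Fin 2) ⟶ Z, incE1 A 0 ≫ H = f ∧ incE1 A 1 ≫ H = g

/-- The set `[A, Z]_{E¹}` of `E¹`-homotopy classes of maps `A ⟶ Z`. -/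
def E1Classes (A Z : SSet) : Type :=
  Quot (@E1Homotopic A Z)

lemma incE1_whiskerRight {A B : SSet} (f : A ⟶ B) (s : Fin 2) :
    incE1 A s ≫ (f ▷ E (Fin 2)) = f ≫ incE1 B s := rfl

/-- Precomposition `[B, Z]_{E¹} → [A, Z]_{E¹}` with a map `f : A ⟶ B`. -/
noncomputable def E1Precomp {A B : SSet} (f : A ⟶ B) (Z : SSet) :
    E1Classes B Z → E1Classes A Z :=
  Quot.map (fun g => f ≫ g) (by
    rintro g g' ⟨H, h0, h1⟩
    refine ⟨(f ▷ E (Fin 2)) ≫ H, ?_, ?_⟩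
    · rw [← Category.assoc, incE1_whiskerRight, Category.assoc, h0]
    · rw [← Category.assoc, incE1_whiskerRight, Category.assoc, h1])

/-- A map of simplicial sets `f : A ⟶ B` is a Joyal equivalence if
`[B, Z]_{E¹} → [A, Z]_{E¹}` is a bijection for every quasicategory `Z`. -/
def JoyalEquiv {A B : SSet} (f : A ⟶ B) : Prop :=
  ∀ (Z : SSet), SSet.Quasicategory Z → Function.Bijective (E1Precomp f Z)

end Paper

namespace Paper

/-- The underlying quiver of a simplicial set `X`: objects are the 0-simplices,
and arrows from `a` to `b` are the 1-simplices `f` with `d₁ f = a` and `d₀ f = b`. -/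
def HoQuiv (X : SSet) : Type := X _⦋0⦌

instance (X : SSet) : Quiver (HoQuiv X) :=
  ⟨fun a b => {f : X _⦋1⦌ // X.δ 1 f = a ∧ X.δ 0 f = b}⟩

/-- The morphism of the free category on the quiver of `X` given by a single
1-simplex `f` with `d₁ f = a` and `d₀ f = b`. -/
def pathMk (X : SSet) {a b : HoQuiv X} (f : X _⦋1⦌)
    (h1 : X.δ 1 f = a) (h0 : X.δ 0 f = b) :
    (Paths.of (HoQuiv X)).obj a ⟶ (Paths.of (HoQuiv X)).obj b :=
  Quiver.Hom.toPath (V := HoQuiv X) ⟨f, h1, h0⟩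

/-- The relations defining the homotopy category `π₀𝔠(X)`: for each 0-simplex `a`
the degenerate 1-simplex `s₀ a` is identified with the identity of `a`, and for each
2-simplex `σ` the composite `d₀σ ∘ d₂σ` is identified with `d₁σ`. -/
inductive HoRel (X : SSet) : HomRel (Paths (HoQuiv X))
| degen (a : HoQuiv X) (h1 : X.δ 1 (X.σ 0 a) = a) (h0 : X.δ 0 (X.σ 0 a) = a) :
      HoRel X (pathMk X (X.σ 0 a) h1 h0) (𝟙 ((Paths.of (HoQuiv X)).obj a))
| comp (σ : X _⦋2⦌) (a b c : HoQuiv X)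
      (hf1 : X.δ 1 (X.δ 2 σ) = a) (hf0 : X.δ 0 (X.δ 2 σ) = b)
      (hg1 : X.δ 1 (X.δ 0 σ) = b) (hg0 : X.δ 0 (X.δ 0 σ) = c)
      (hh1 : X.δ 1 (X.δ 1 σ) = a) (hh0 : X.δ 0 (X.δ 1 σ) = c) :
      HoRel X (pathMk X (X.δ 2 σ) hf1 hf0 ≫ pathMk X (X.δ 0 σ) hg1 hg0)
        (pathMk X (X.δ 1 σ) hh1 hh0)

/-- The homotopy category `π₀𝔠(X)` of a simplicial set `X`: the category with objects
the 0-simplices of `X`, generated by the 1-simplices subject to the relations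
`s₀ a = id_a` and `d₁σ = d₀σ ∘ d₂σ`.  (This is the value at `X` of the left adjoint
of the classical nerve functor.) -/
def HoCat (X : SSet) : Type := CategoryTheory.Quotient (HoRel X)

instance (X : SSet) : Category (HoCat X) :=
  inferInstanceAs (Category (CategoryTheory.Quotient (HoRel X)))

/-- The object of `π₀𝔠(X)` corresponding to a 0-simplex. -/
def hoObj (X : SSet) (a : X _⦋0⦌) : HoCat X :=
  (CategoryTheory.Quotient.functor (HoRel X)).obj ((Paths.of (HoQuiv X)).obj a)

/-- The morphism of `π₀𝔠(X)` represented by a 1-simplex `f` with `d₁ f = a` and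
`d₀ f = b`. -/
def hoMk (X : SSet) {a b : X _⦋0⦌} (f : X _⦋1⦌)
    (h1 : X.δ 1 f = a) (h0 : X.δ 0 f = b) :
    hoObj X a ⟶ hoObj X b :=
  (CategoryTheory.Quotient.functor (HoRel X)).map (pathMk X f h1 h0)

end Paper


open SimplexCategory

namespace Paper

lemma delta_cancel {m : SimplexCategory} {n : ℕ} {u w : m ⟶ ⦋n⦌} (j : Fin (n+2))
    (h : u ≫ δ j = w ≫ δ j) : u = w := by
  ext k : 3
  have := congrArg (fun (f : m ⟶ ⦋n+1⦌) => f.toOrderHom k) h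
  dsimp [δ] at this
  exact Fin.succAbove_right_injective this


def fac {n : ℕ} {m : SimplexCategory} (f : m ⟶ ⦋n+1⦌) (j : Fin (n+2)) : m ⟶ ⦋n⦌ :=
  f ≫ σ (Fin.predAbove 0 j)

lemma fac_spec {n : ℕ} {m : SimplexCategory} (f : m ⟶ ⦋n+1⦌) (j : Fin (n+2))
    (hj : ∀ (k : Fin (m.len+1)), f.toOrderHom k ≠ j) : fac f j ≫ δ j = f :=
  SimplexCategory.factor_δ_spec (m := m.len) f j hj

section Fill
variable (X : SSet) {n : ℕ} (i : Fin (n+3))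
  (F : ∀ j : Fin (n+3), j ≠ i → X _⦋n+1⦌)

/-- The compatibility condition on a family of faces. -/
def Compat : Prop :=
  ∀ (j k : Fin (n+3)) (hj : j ≠ i) (hk : k ≠ i) (hjk : j < k),
      X.δ (k.pred (Fin.pos_iff_ne_zero.mp (lt_of_le_of_lt (Fin.zero_le _) hjk)))
          (F j hj)
        = X.δ (j.castPred (Fin.ne_last_of_lt hjk)) (F k hk)

/-- value of the horn hom on a simplex missing `j` -/
noncomputable def hornVal {m : SimplexCategory} (f : m ⟶ ⦋n+2⦌)
    (j : Fin (n+3)) (hj : j ≠ i) : X.obj (op m) :=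
  X.map (fac f j).op (F j hj)

lemma hornVal_indep_lt {m : SimplexCategory} (f : m ⟶ ⦋n+2⦌)
    (compat : Compat X i F)
    (j k : Fin (n+3)) (hj : j ≠ i) (hk : k ≠ i) (hlt : j < k)
    (hjf : ∀ p, f.toOrderHom p ≠ j) (hkf : ∀ p, f.toOrderHom p ≠ k) :
    hornVal X i F f j hj = hornVal X i F f k hk := by
  have hk0 : k ≠ 0 := Fin.pos_iff_ne_zero.mp (lt_of_le_of_lt (Fin.zero_le _) hlt)
  have hjl : j ≠ Fin.last _ := Fin.ne_last_of_lt hlt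
  set l' : Fin (n+2) := j.castPred hjl with hl'
  set l : Fin (n+2) := k.pred hk0 with hl
  have hcs : l'.castSucc = j := Fin.castSucc_castPred _ _
  have hu : fac f k ≫ δ k = f := fac_spec f k hkf
  have missing : ∀ p, (fac f k).toOrderHom p ≠ l' := by
    intro p h
    apply hjf p
    have h2 : k.succAbove ((fac f k).toOrderHom p) = f.toOrderHom p := by
      have := congrArg (fun (q : m ⟶ ⦋n+2⦌) => q.toOrderHom p) hu
      exact this
    rw [← h2, h]
    rw [show (Fin.succAbove k l') = l'.castSucc from
      Fin.succAbove_of_castSucc_lt _ _ (by rw [hcs]; exact hlt), hcs]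
  have hg : fac (fac f k) l' ≫ δ l' = fac f k :=
    fac_spec _ l' missing
  set g := fac (fac f k) l' with hgdef
  have hsw : δ l' ≫ δ k = δ l ≫ δ j := by
    have h5 := δ_comp_δ' (i := l') (j := k) (by rw [hcs]; exact hlt)
    simp only [hcs] at h5
    exact h5
  have hfj : fac f j = g ≫ δ l := by
    apply delta_cancel j
    rw [fac_spec f j hjf, Category.assoc, ← hsw, ← Category.assoc, hg, hu]
  show X.map (fac f j).op (F j hj) = X.map (fac f k).op (F k hk)
  rw [hfj, ← hg]
  have e1 : (g ≫ δ l).op = (δ l).op ≫ g.op := rfl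
  have e2 : (g ≫ δ l').op = (δ l').op ≫ g.op := rfl
  rw [e1, e2, X.map_comp, X.map_comp]
  dsimp only [types_comp_apply]
  apply congrArg
  exact compat j k hj hk hlt

lemma hornVal_indep {m : SimplexCategory} (f : m ⟶ ⦋n+2⦌)
    (compat : Compat X i F)
    (j k : Fin (n+3)) (hj : j ≠ i) (hk : k ≠ i)
    (hjf : ∀ p, f.toOrderHom p ≠ j) (hkf : ∀ p, f.toOrderHom p ≠ k) :
    hornVal X i F f j hj = hornVal X i F f k hk := by
  rcases lt_trichotomy j k with hlt | rfl | hlt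
  · exact hornVal_indep_lt X i F f compat j k hj hk hlt hjf hkf
  · rfl
  · exact (hornVal_indep_lt X i F f compat k j hk hj hlt hkf hjf).symm

end Fill
end Paper


namespace Paper
open SSet
section Fill2
variable (X : SSet) {n : ℕ} (i : Fin (n+3))
  (F : ∀ j : Fin (n+3), j ≠ i → X _⦋n+1⦌)

/-- identity simplex -/
def sid (k : ℕ) : Δ[k] _⦋k⦌ := stdSimplex.objEquiv.symm (𝟙 _)

lemma horn_missing {m : SimplexCategoryᵒᵖ} (α : (Λ[n+2, i] : SSet).obj m) :
    ∃ j, j ≠ i ∧ ∀ p, (stdSimplex.objEquiv α.1).toOrderHom p ≠ j := by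
  obtain ⟨f, hf'⟩ := α
  simp [← Set.univ_subset_iff, Set.subset_def, stdSimplex.asOrderHom, not_or, mem_horn_iff,
    stdSimplex.objEquiv, Equiv.ulift, Equiv.coe_fn_mk] at hf'
  exact hf'

/-- The chosen missing index. -/
noncomputable def idx {m : SimplexCategoryᵒᵖ} (α : (Λ[n+2, i] : SSet).obj m) : Fin (n+3) :=
  (horn_missing i α).choose

lemma idx_ne {m : SimplexCategoryᵒᵖ} (α : (Λ[n+2, i] : SSet).obj m) : idx i α ≠ i :=
  (horn_missing i α).choose_spec.1

lemma idx_missing {m : SimplexCategoryᵒᵖ} (α : (Λ[n+2, i] : SSet).obj m) :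
    ∀ p, (stdSimplex.objEquiv α.1).toOrderHom p ≠ idx i α :=
  (horn_missing i α).choose_spec.2

noncomputable def hornHom (compat : Compat X i F) : (Λ[n+2, i] : SSet) ⟶ X where
  app m := TypeCat.ofHom (fun α => hornVal X i F (stdSimplex.objEquiv α.1) (idx i α) (idx_ne i α))
  naturality m m' φ := by
    ext α
    show hornVal X i F (stdSimplex.objEquiv (((Λ[n+2,i] : SSet).map φ α).1))
        (idx i ((Λ[n+2,i] : SSet).map φ α)) (idx_ne i _)
      = X.map φ (hornVal X i F (stdSimplex.objEquiv α.1) (idx i α) (idx_ne i α))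
    set f' := stdSimplex.objEquiv α.1 with hf'
    have hmap : stdSimplex.objEquiv (((Λ[n+2,i] : SSet).map φ α).1)
        = φ.unop ≫ f' := by
      show stdSimplex.objEquiv (Δ[n+2].map φ α.1) = φ.unop ≫ f'
      rw [stdSimplex.map_apply, Equiv.apply_symm_apply]
    have hmiss : ∀ p, (φ.unop ≫ f').toOrderHom p ≠ idx i α := fun p =>
      idx_missing i α (φ.unop.toOrderHom p)
    have step1 : hornVal X i F (stdSimplex.objEquiv (((Λ[n+2,i] : SSet).map φ α).1))
         (idx i ((Λ[n+2,i] : SSet).map φ α)) (idx_ne i _)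
        = hornVal X i F (φ.unop ≫ f') (idx i α) (idx_ne i α) := by
      have h1 := hornVal_indep X i F (stdSimplex.objEquiv
          (((Λ[n+2,i] : SSet).map φ α).1)) compat
          (idx i ((Λ[n+2,i] : SSet).map φ α)) (idx i α) (idx_ne i _) (idx_ne i α)
          (idx_missing i _) (by rw [hmap]; exact hmiss)
      rw [h1]
      congr 1
    rw [step1]
    show X.map (fac (φ.unop ≫ f') (idx i α)).op (F _ _)
        = X.map φ (X.map (fac f' (idx i α)).op (F _ _))
    have h2 : fac (φ.unop ≫ f') (idx i α) = φ.unop ≫ fac f' (idx i α) :=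
      Category.assoc _ _ _
    rw [h2]
    have h3 : (φ.unop ≫ fac f' (idx i α)).op = (fac f' (idx i α)).op ≫ φ := rfl
    rw [h3, X.map_comp]
    rfl

lemma exists_filler [SSet.Quasicategory X] (h0 : 0 < i) (hn : i < Fin.last (n+2))
    (compat : Compat X i F) :
    ∃ σ : X _⦋n+2⦌, ∀ (j) (hj : j ≠ i), X.δ j σ = F j hj := by
  obtain ⟨σmap, hσ⟩ := SSet.Quasicategory.hornFilling h0 hn (hornHom X i F compat)
  refine ⟨σmap.app (op ⦋n+2⦌) (sid _), fun j hj => ?_⟩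
  have hnat : σmap.app (op ⦋n+1⦌) (Δ[n+2].map (SimplexCategory.δ j).op (sid (n+2)))
      = X.map (SimplexCategory.δ j).op (σmap.app (op ⦋n+2⦌) (sid (n+2))) :=
    types_congr_hom (σmap.naturality (SimplexCategory.δ j).op) (sid (n+2))
  show X.map (SimplexCategory.δ j).op (σmap.app (op ⦋n+2⦌) (sid _)) = F j hj
  rw [← hnat]
  have e0 : Δ[n+2].map (SimplexCategory.δ j).op (sid (n+2))
      = (Λ[n+2, i].ι).app (op ⦋n+1⦌) (horn.face i j hj) := by
    rw [stdSimplex.map_apply, sid, Equiv.apply_symm_apply, Category.comp_id]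
    rfl
  rw [e0]
  have e2 : (hornHom X i F compat).app (op ⦋n+1⦌) (horn.face i j hj)
      = σmap.app (op ⦋n+1⦌) ((Λ[n+2, i].ι).app (op ⦋n+1⦌) (horn.face i j hj)) :=
    types_congr_hom (congrFun (congrArg NatTrans.app hσ) (op ⦋n+1⦌)) (horn.face i j hj)
  rw [← e2]
  -- now compute the horn hom on the face
  show hornVal X i F (stdSimplex.objEquiv (horn.face i j hj).1) _ _ = F j hj
  have hface : (stdSimplex.objEquiv (horn.face i j hj).1) = SimplexCategory.δ j :=
    Equiv.apply_symm_apply _ _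
  have hmissj : ∀ p, (stdSimplex.objEquiv (horn.face i j hj).1).toOrderHom p ≠ j := by
    rw [hface]; intro p; exact Fin.succAbove_ne j p
  rw [hornVal_indep X i F _ compat _ j _ hj (idx_missing i _) hmissj]
  show X.map (fac _ j).op (F j hj) = F j hj
  have hid : fac (stdSimplex.objEquiv (horn.face i j hj).1) j = 𝟙 _ := by
    apply delta_cancel j
    rw [fac_spec _ j hmissj, Category.id_comp, hface]
  rw [hid]
  have : (𝟙 (⦋n+1⦌ : SimplexCategory)).op = 𝟙 (op (⦋n+1⦌ : SimplexCategory)) := rfl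
  rw [this, X.map_id]
  rfl

end Fill2
end Paper

namespace Paper
section Helpers
variable (X : SSet)

lemma d1d2 (x : X _⦋2⦌) : X.δ 1 (X.δ 2 x) = X.δ 1 (X.δ 1 x) :=
  SSet.δ_comp_δ_apply (i := 1) (j := 1) (le_refl _) x
lemma d0d1 (x : X _⦋2⦌) : X.δ 0 (X.δ 1 x) = X.δ 0 (X.δ 0 x) :=
  SSet.δ_comp_δ_apply (i := 0) (j := 0) (le_refl _) x
lemma d0d2 (x : X _⦋2⦌) : X.δ 0 (X.δ 2 x) = X.δ 1 (X.δ 0 x) :=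
  SSet.δ_comp_δ_apply (i := 0) (j := 1) (by decide) x

lemma D0D1 (x : X _⦋3⦌) : X.δ 0 (X.δ 1 x) = X.δ 0 (X.δ 0 x) :=
  SSet.δ_comp_δ_apply (i := 0) (j := 0) (le_refl _) x
lemma D1D2 (x : X _⦋3⦌) : X.δ 1 (X.δ 2 x) = X.δ 1 (X.δ 1 x) :=
  SSet.δ_comp_δ_apply (i := 1) (j := 1) (le_refl _) x
lemma D1D3 (x : X _⦋3⦌) : X.δ 1 (X.δ 3 x) = X.δ 2 (X.δ 1 x) :=
  SSet.δ_comp_δ_apply (i := 1) (j := 2) (by decide) x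
lemma D2D3 (x : X _⦋3⦌) : X.δ 2 (X.δ 3 x) = X.δ 2 (X.δ 2 x) :=
  SSet.δ_comp_δ_apply (i := 2) (j := 2) (le_refl _) x
lemma D0D2 (x : X _⦋3⦌) : X.δ 0 (X.δ 2 x) = X.δ 1 (X.δ 0 x) :=
  SSet.δ_comp_δ_apply (i := 0) (j := 1) (by decide) x
lemma D0D3 (x : X _⦋3⦌) : X.δ 0 (X.δ 3 x) = X.δ 2 (X.δ 0 x) :=
  SSet.δ_comp_δ_apply (i := 0) (j := 2) (by decide) x

lemma d0s0 {k : ℕ} (e : X _⦋k⦌) : X.δ 0 (X.σ 0 e) = e :=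
  SSet.δ_comp_σ_self'_apply (by simp) e
lemma d1s0 {k : ℕ} (e : X _⦋k⦌) : X.δ 1 (X.σ 0 e) = e :=
  SSet.δ_comp_σ_succ'_apply (by simp) e
lemma d2s0 (e : X _⦋1⦌) : X.δ 2 (X.σ 0 e) = X.σ 0 (X.δ 1 e) :=
  SSet.δ_comp_σ_of_gt_apply (i := 1) (j := 0) (by decide) e
lemma d0s1 (e : X _⦋1⦌) : X.δ 0 (X.σ 1 e) = X.σ 0 (X.δ 0 e) :=
  SSet.δ_comp_σ_of_le_apply (i := 0) (j := 0) (by decide) e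
lemma d1s1 (e : X _⦋1⦌) : X.δ 1 (X.σ 1 e) = e :=
  SSet.δ_comp_σ_self'_apply (by simp [Fin.ext_iff]) e
lemma d2s1 (e : X _⦋1⦌) : X.δ 2 (X.σ 1 e) = e :=
  SSet.δ_comp_σ_succ'_apply (by simp [Fin.ext_iff]) e
end Helpers
end Paper

namespace Paper
section QC
variable (X : SSet) [SSet.Quasicategory X]

/-- Fill a `Λ[2,1]` horn: compose two edges. -/
lemma fill20 (u v : X _⦋1⦌) (h : X.δ 0 u = X.δ 1 v) :
    ∃ θ : X _⦋2⦌, X.δ 2 θ = u ∧ X.δ 0 θ = v := by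
  have compat : Compat X (1 : Fin 3) (fun j _ => ![v, v, u] j) := by
    intro j k hj hk hjk
    fin_cases j <;> fin_cases k <;>
      first
        | exact absurd rfl hj
        | exact absurd rfl hk
        | exact absurd hjk (by decide)
        | exact h.symm
  obtain ⟨θ, hθ⟩ := exists_filler X (1 : Fin 3) _ (by decide) (by decide) compat
  exact ⟨θ, by simpa using hθ 2 (by decide), by simpa using hθ 0 (by decide)⟩

/-- Fill a `Λ[3,1]` horn. -/
lemma fill31 (F0 F2 F3 : X _⦋2⦌)
    (c02 : X.δ 1 F0 = X.δ 0 F2) (c03 : X.δ 2 F0 = X.δ 0 F3)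
    (c23 : X.δ 2 F3 = X.δ 2 F2) :
    ∃ F1 : X _⦋2⦌, X.δ 2 F1 = X.δ 1 F3 ∧ X.δ 1 F1 = X.δ 1 F2 ∧ X.δ 0 F1 = X.δ 0 F0 := by
  have compat : Compat X (1 : Fin 4) (fun j _ => ![F0, F0, F2, F3] j) := by
    intro j k hj hk hjk
    fin_cases j <;> fin_cases k <;>
      first
        | exact absurd rfl hj
        | exact absurd rfl hk
        | exact absurd hjk (by decide)
        | exact c02
        | exact c03
        | exact c23.symm
  obtain ⟨ρ, hρ⟩ := exists_filler X (1 : Fin 4) _ (by decide) (by decide) compat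
  have h0 : X.δ 0 ρ = F0 := by simpa using hρ 0 (by decide)
  have h2 : X.δ 2 ρ = F2 := by simpa using hρ 2 (by decide)
  have h3 : X.δ 3 ρ = F3 := by simpa using hρ 3 (by decide)
  exact ⟨X.δ 1 ρ, by rw [← h3, D1D3], by rw [← h2, D1D2], by rw [← h0, D0D1]⟩

/-- Fill a `Λ[3,2]` horn. -/
lemma fill32 (F0 F1 F3 : X _⦋2⦌)
    (c01 : X.δ 0 F0 = X.δ 0 F1) (c03 : X.δ 2 F0 = X.δ 0 F3)
    (c13 : X.δ 2 F1 = X.δ 1 F3) :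
    ∃ F2 : X _⦋2⦌, X.δ 2 F2 = X.δ 2 F3 ∧ X.δ 1 F2 = X.δ 1 F1 ∧ X.δ 0 F2 = X.δ 1 F0 := by
  have compat : Compat X (2 : Fin 4) (fun j _ => ![F0, F1, F1, F3] j) := by
    intro j k hj hk hjk
    fin_cases j <;> fin_cases k <;>
      first
        | exact absurd rfl hj
        | exact absurd rfl hk
        | exact absurd hjk (by decide)
        | exact c01
        | exact c03
        | exact c13
  obtain ⟨ρ, hρ⟩ := exists_filler X (2 : Fin 4) _ (by decide) (by decide) compat
  have h0 : X.δ 0 ρ = F0 := by simpa using hρ 0 (by decide)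
  have h1 : X.δ 1 ρ = F1 := by simpa using hρ 1 (by decide)
  have h3 : X.δ 3 ρ = F3 := by simpa using hρ 3 (by decide)
  exact ⟨X.δ 2 ρ, by rw [← h3, D2D3], by rw [← h1, D1D2], by rw [← h0, D0D2]⟩

end QC
end Paper



namespace Paper
section Htpy
variable (X : SSet) [SSet.Quasicategory X]

/-- Homotopy of 1-simplices (rel endpoints). -/
def htpy (u v : X _⦋1⦌) : Prop :=
  ∃ σ : X _⦋2⦌, X.δ 2 σ = u ∧ X.δ 1 σ = v ∧ X.δ 0 σ = X.σ 0 (X.δ 0 u)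

variable {X}

lemma htpy_d1 {u v : X _⦋1⦌} (h : htpy X u v) : X.δ 1 u = X.δ 1 v := by
  obtain ⟨σ, h2, h1, _⟩ := h
  rw [← h2, ← h1, d1d2]

lemma htpy_d0 {u v : X _⦋1⦌} (h : htpy X u v) : X.δ 0 u = X.δ 0 v := by
  obtain ⟨σ, h2, h1, h0⟩ := h
  rw [← h1, d0d1, h0, d0s0]

lemma htpy_refl (u : X _⦋1⦌) : htpy X u u :=
  ⟨X.σ 1 u, d2s1 X u, d1s1 X u, d0s1 X u⟩

lemma htpy_left_cancel {u v w : X _⦋1⦌} (huv : htpy X u v) (huw : htpy X u w) :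
    htpy X v w := by
  obtain ⟨θ1, a2, a1, a0⟩ := huv
  obtain ⟨θ2, b2, b1, b0⟩ := huw
  set b := X.δ 0 u with hb
  obtain ⟨F1, e2, e1, e0⟩ := fill31 X (X.σ 0 (X.σ 0 b)) θ2 θ1
    (by rw [d1s0, b0]) (by rw [d2s0, d1s0, a0]) (by rw [a2, b2])
  refine ⟨F1, by rw [e2, a1], by rw [e1, b1], ?_⟩
  rw [e0, d0s0, hb, htpy_d0 (⟨θ1, a2, a1, a0⟩ : htpy X u v)]

lemma htpy_symm {u v : X _⦋1⦌} (h : htpy X u v) : htpy X v u :=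
  htpy_left_cancel h (htpy_refl u)

lemma htpy_trans {u v w : X _⦋1⦌} (h1 : htpy X u v) (h2 : htpy X v w) : htpy X u w :=
  htpy_left_cancel (htpy_symm h1) h2

/-- Any two fillers of the same `Λ[2,1]` horn have homotopic diagonals. -/
lemma diag_unique {σ σ' : X _⦋2⦌} (h2 : X.δ 2 σ = X.δ 2 σ') (h0 : X.δ 0 σ = X.δ 0 σ') :
    htpy X (X.δ 1 σ) (X.δ 1 σ') := by
  set v := X.δ 0 σ with hv
  obtain ⟨F1, e2, e1, e0⟩ := fill31 X (X.σ 1 v) σ' σ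
    (by rw [d1s1, h0]) (by rw [d2s1]) h2
  exact ⟨F1, e2, e1, by rw [e0, d0s1, d0d1, hv]⟩

/-- Replace the diagonal of a 2-simplex by a homotopic edge. -/
lemma change_diag {σ₀ : X _⦋2⦌} {h' : X _⦋1⦌} (h : htpy X (X.δ 1 σ₀) h') :
    ∃ σ : X _⦋2⦌, X.δ 2 σ = X.δ 2 σ₀ ∧ X.δ 0 σ = X.δ 0 σ₀ ∧ X.δ 1 σ = h' := by
  obtain ⟨θ, a2, a1, a0⟩ := h
  set v := X.δ 0 σ₀ with hv
  obtain ⟨F2, e2, e1, e0⟩ := fill32 X (X.σ 1 v) θ σ₀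
    (by rw [d0s1, a0, d0d1, hv]) (by rw [d2s1]) (by rw [a2])
  exact ⟨F2, e2, by rw [e0, d1s1], by rw [e1, a1]⟩

/-- Replace the `d₂`-edge of a 2-simplex by a homotopic edge. -/
lemma change_d2 {σ : X _⦋2⦌} {u' : X _⦋1⦌} (h : htpy X u' (X.δ 2 σ)) :
    ∃ σ' : X _⦋2⦌, X.δ 2 σ' = u' ∧ X.δ 0 σ' = X.δ 0 σ ∧ X.δ 1 σ' = X.δ 1 σ := by
  obtain ⟨θ, a2, a1, a0⟩ := h
  set v := X.δ 0 σ with hv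
  obtain ⟨F2, e2, e1, e0⟩ := fill32 X (X.σ 0 v) σ θ
    (by rw [d0s0, hv]) (by rw [d2s0, a0, htpy_d0 ⟨θ, a2, a1, a0⟩, d0d2, hv]) (by rw [a1])
  exact ⟨F2, by rw [e2, a2], by rw [e0, d1s0], by rw [e1]⟩

/-- Replace the `d₀`-edge of a 2-simplex by a homotopic edge. -/
lemma change_d0 {σ : X _⦋2⦌} {v' : X _⦋1⦌} (h : htpy X (X.δ 0 σ) v') :
    ∃ σ' : X _⦋2⦌, X.δ 2 σ' = X.δ 2 σ ∧ X.δ 0 σ' = v' ∧ X.δ 1 σ' = X.δ 1 σ := by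
  obtain ⟨θ, a2, a1, a0⟩ := h
  obtain ⟨F2, e2, e1, e0⟩ := fill32 X θ (X.σ 1 (X.δ 1 σ)) σ
    (by rw [a0, d0s1, d0d1]) (by rw [a2]) (by rw [d2s1])
  exact ⟨F2, e2, by rw [e0, a1], by rw [e1, d1s1]⟩

/-- Composites of composable pairs. -/
lemma comp3 {σ12 σ23 σp : X _⦋2⦌}
    (h1 : X.δ 0 σ12 = X.δ 2 σ23) (h2 : X.δ 1 σ12 = X.δ 2 σp)
    (h3 : X.δ 0 σ23 = X.δ 0 σp) :
    ∃ σ : X _⦋2⦌, X.δ 2 σ = X.δ 2 σ12 ∧ X.δ 0 σ = X.δ 1 σ23 ∧ X.δ 1 σ = X.δ 1 σp := by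
  obtain ⟨F2, e2, e1, e0⟩ := fill32 X σ23 σp σ12 h3 h1.symm h2.symm
  exact ⟨F2, e2, e0, e1⟩

end Htpy
end Paper

namespace Paper
section Dcat
variable (X : SSet) [SSet.Quasicategory X]

/-- Edges from `a` to `b`. -/
abbrev EdgeT (a b : X _⦋0⦌) : Type := @Quiver.Hom (HoQuiv X) _ a b

/-- Homotopy of parallel edges. -/
def eRel {a b : X _⦋0⦌} (u v : EdgeT X a b) : Prop := htpy X u.1 v.1

lemma eRel_equiv (a b : X _⦋0⦌) : Equivalence (@eRel X a b) :=
  ⟨fun u => htpy_refl u.1, htpy_symm, htpy_trans⟩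

/-- The identity edge. -/
def idE (a : X _⦋0⦌) : EdgeT X a a := ⟨X.σ 0 a, d1s0 X a, d0s0 X a⟩

/-- A chosen composite of two edges. -/
noncomputable def compE {a b c : X _⦋0⦌} (u : EdgeT X a b) (v : EdgeT X b c) :
    EdgeT X a c :=
  ⟨X.δ 1 (fill20 X u.1 v.1 (by rw [u.2.2, v.2.1])).choose, by
      rw [← d1d2, (fill20 X u.1 v.1 (by rw [u.2.2, v.2.1])).choose_spec.1, u.2.1], by
      rw [d0d1, (fill20 X u.1 v.1 (by rw [u.2.2, v.2.1])).choose_spec.2, v.2.2]⟩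

lemma compE_witness {a b c : X _⦋0⦌} (u : EdgeT X a b) (v : EdgeT X b c) :
    ∃ θ : X _⦋2⦌, X.δ 2 θ = u.1 ∧ X.δ 0 θ = v.1 ∧ X.δ 1 θ = (compE X u v).1 :=
  ⟨(fill20 X u.1 v.1 (by rw [u.2.2, v.2.1])).choose,
    (fill20 X u.1 v.1 (by rw [u.2.2, v.2.1])).choose_spec.1,
    (fill20 X u.1 v.1 (by rw [u.2.2, v.2.1])).choose_spec.2, rfl⟩

lemma compE_unique {a b c : X _⦋0⦌} (u : EdgeT X a b) (v : EdgeT X b c)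
    (σ : X _⦋2⦌) (h2 : X.δ 2 σ = u.1) (h0 : X.δ 0 σ = v.1) :
    htpy X (X.δ 1 σ) (compE X u v).1 := by
  obtain ⟨θ, t2, t0, t1⟩ := compE_witness X u v
  rw [← t1]
  exact diag_unique (by rw [h2, t2]) (by rw [h0, t0])

lemma compE_congr {a b c : X _⦋0⦌} {u u' : EdgeT X a b} {v v' : EdgeT X b c}
    (hu : eRel X u u') (hv : eRel X v v') : eRel X (compE X u v) (compE X u' v') := by
  obtain ⟨θ, t2, t0, t1⟩ := compE_witness X u v
  obtain ⟨σ', s2, s0, s1⟩ := change_d2 (σ := θ) (t2 ▸ htpy_symm hu)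
  obtain ⟨σ'', r2, r0, r1⟩ := change_d0 (σ := σ') (v' := v'.1) (by rw [s0, t0]; exact hv)
  have := compE_unique X u' v' σ'' (by rw [r2, s2]) r0
  rw [r1, s1, t1] at this
  exact this

noncomputable instance DcatStruct : CategoryStruct (X _⦋0⦌) where
  Hom a b := Quot (@eRel X a b)
  id a := Quot.mk _ (idE X a)
  comp {a b c} qu qv :=
    Quot.lift (fun u => Quot.lift (fun v => Quot.mk _ (compE X u v))
        (fun v v' hv => Quot.sound (compE_congr X ((eRel_equiv X a b).refl u) hv)))
      (fun u u' hu => funext fun qv => Quot.inductionOn qv fun v =>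
        Quot.sound (compE_congr X hu ((eRel_equiv X b c).refl v))) qu qv

noncomputable instance Dcat : Category (X _⦋0⦌) where
  id_comp {a b} f := by
    refine Quot.inductionOn f fun u => Quot.sound ?_
    have h := compE_unique X (idE X a) u (X.σ 0 u.1)
      (by rw [d2s0, u.2.1]; rfl) (d0s0 X u.1)
    rw [d1s0] at h
    exact htpy_symm h
  comp_id {a b} f := by
    refine Quot.inductionOn f fun u => Quot.sound ?_
    have h := compE_unique X u (idE X b) (X.σ 1 u.1)
      (d2s1 X u.1) (by rw [d0s1, u.2.2]; rfl)
    rw [d1s1] at h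
    exact htpy_symm h
  assoc {a b c d} f g h := by
    refine Quot.inductionOn f fun u => Quot.inductionOn g fun v =>
      Quot.inductionOn h fun w => Quot.sound ?_
    obtain ⟨θ1, p2, p0, p1⟩ := compE_witness X u v
    obtain ⟨θ2, q2, q0, q1⟩ := compE_witness X v w
    obtain ⟨θ3, r2, r0, r1⟩ := compE_witness X (compE X u v) w
    obtain ⟨σ, e2, e0, e1⟩ := comp3 (σ12 := θ1) (σ23 := θ2) (σp := θ3)
      (by rw [p0, q2]) (by rw [p1, r2]) (by rw [q0, r0])
    have := compE_unique X u (compE X v w) σ (by rw [e2, p2]) (by rw [e0, q1])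
    rw [e1, r1] at this
    exact this

/-- The prefunctor from the underlying quiver to the (combinatorial) homotopy category. -/
noncomputable def phiD : (HoQuiv X) ⥤q (X _⦋0⦌) where
  obj a := a
  map {a b} e := Quot.mk _ e

noncomputable def GFun : Paths (HoQuiv X) ⥤ (X _⦋0⦌) := Paths.lift (phiD X)

lemma GFun_toPath {a b : HoQuiv X} (e : a ⟶ b) :
    (GFun X).map (Quiver.Hom.toPath e) = Quot.mk _ e :=
  Paths.lift_toPath _ _

lemma GFun_resp : ∀ (x y : Paths (HoQuiv X)) (p q : x ⟶ y),
    HoRel X p q → (GFun X).map p = (GFun X).map q := by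
  intro x y p q h
  cases h with
  | degen a h1 h0 =>
    rw [CategoryTheory.Functor.map_id]
    show (GFun X).map (Quiver.Hom.toPath _) = _
    refine (GFun_toPath X _).trans ?_
    show Quot.mk _ (⟨X.σ 0 a, h1, h0⟩ : EdgeT X a a) = Quot.mk _ (idE X a)
    rfl
  | comp σ a b c hf1 hf0 hg1 hg0 hh1 hh0 =>
    rw [Functor.map_comp]
    show (GFun X).map (Quiver.Hom.toPath (⟨X.δ 2 σ, hf1, hf0⟩ : EdgeT X a b))
        ≫ (GFun X).map (Quiver.Hom.toPath (⟨X.δ 0 σ, hg1, hg0⟩ : EdgeT X b c))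
      = (GFun X).map (Quiver.Hom.toPath (⟨X.δ 1 σ, hh1, hh0⟩ : EdgeT X a c))
    rw [GFun_toPath, GFun_toPath, GFun_toPath]
    show Quot.mk _ (compE X ⟨X.δ 2 σ, hf1, hf0⟩ ⟨X.δ 0 σ, hg1, hg0⟩)
      = Quot.mk _ (⟨X.δ 1 σ, hh1, hh0⟩ : EdgeT X a c)
    exact Quot.sound (htpy_symm (compE_unique X ⟨X.δ 2 σ, hf1, hf0⟩ ⟨X.δ 0 σ, hg1, hg0⟩ σ rfl rfl))

noncomputable def Ffun : HoCat X ⥤ (X _⦋0⦌) :=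
  CategoryTheory.Quotient.lift _ (GFun X) (GFun_resp X)

lemma Ffun_hoMk {a b : X _⦋0⦌} (f : X _⦋1⦌) (h1 : X.δ 1 f = a) (h0 : X.δ 0 f = b) :
    (Ffun X).map (hoMk X f h1 h0) = Quot.mk _ (⟨f, h1, h0⟩ : EdgeT X a b) := by
  exact (CategoryTheory.Quotient.lift_map_functor_map _ (GFun X) (GFun_resp X)
    (pathMk X f h1 h0)).trans (GFun_toPath X _)

end Dcat
end Paper

namespace Paper
section Main
variable (X : SSet) [SSet.Quasicategory X]

lemma hoMk_congr {a b : X _⦋0⦌} {f f' : X _⦋1⦌} (h : f = f')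
    (h1 : X.δ 1 f = a) (h0 : X.δ 0 f = b) (h1' : X.δ 1 f' = a) (h0' : X.δ 0 f' = b) :
    hoMk X f h1 h0 = hoMk X f' h1' h0' := by subst h; rfl

theorem statement11' (f : X _⦋1⦌) :
    IsQuasiIso f ↔ IsIso (hoMk X f rfl rfl) := by
  constructor
  · rintro ⟨g, σ, τ, hg1, hg0, hσ2, hσ0, hσ1, hτ2, hτ0, hτ1⟩
    subst hσ2; subst hσ0
    refine ⟨⟨hoMk X (X.δ 0 σ) hg1 hg0, ?_, ?_⟩⟩
    · calc hoMk X (X.δ 2 σ) rfl rfl ≫ hoMk X (X.δ 0 σ) hg1 hg0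
          = hoMk X (X.δ 1 σ) (d1d2 X σ).symm ((d0d1 X σ).trans hg0) := by
            show (CategoryTheory.Quotient.functor _).map _
              ≫ (CategoryTheory.Quotient.functor _).map _ = _
            rw [← Functor.map_comp]
            exact CategoryTheory.Quotient.sound _
              (HoRel.comp σ _ _ _ rfl rfl hg1 hg0 (d1d2 X σ).symm ((d0d1 X σ).trans hg0))
        _ = hoMk X (X.σ 0 (X.δ 1 (X.δ 2 σ))) (d1s0 X _) (d0s0 X _) :=
            hoMk_congr X hσ1 _ _ _ _
        _ = 𝟙 _ :=
            (CategoryTheory.Quotient.sound _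
              (HoRel.degen _ (d1s0 X _) (d0s0 X _))).trans (CategoryTheory.Functor.map_id _ _)
    · calc hoMk X (X.δ 0 σ) hg1 hg0 ≫ hoMk X (X.δ 2 σ) rfl rfl
          = hoMk X (X.δ 2 τ) (by rw [hτ2]; exact hg1) (by rw [hτ2]; exact hg0)
              ≫ hoMk X (X.δ 0 τ) (congrArg (X.δ 1) hτ0) (congrArg (X.δ 0) hτ0) := by
            rw [hoMk_congr X hτ2.symm hg1 hg0, hoMk_congr X hτ0.symm rfl rfl]
        _ = hoMk X (X.δ 1 τ) ((d1d2 X τ).symm.trans (by rw [hτ2]; exact hg1))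
              ((d0d1 X τ).trans (congrArg (X.δ 0) hτ0)) := by
            show (CategoryTheory.Quotient.functor _).map _
              ≫ (CategoryTheory.Quotient.functor _).map _ = _
            rw [← Functor.map_comp]
            exact CategoryTheory.Quotient.sound _
              (HoRel.comp τ _ _ _ _ _ _ _ _ _)
        _ = hoMk X (X.σ 0 (X.δ 0 (X.δ 2 σ))) (d1s0 X _) (d0s0 X _) :=
            hoMk_congr X hτ1 _ _ _ _
        _ = 𝟙 _ :=
            (CategoryTheory.Quotient.sound _
              (HoRel.degen _ (d1s0 X _) (d0s0 X _))).trans (CategoryTheory.Functor.map_id _ _)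
  · intro hiso
    have h2 : IsIso ((Ffun X).map (hoMk X f rfl rfl)) := inferInstance
    rw [Ffun_hoMk] at h2
    obtain ⟨k, hk1, hk2⟩ := h2.out
    obtain ⟨gE, hgE⟩ := Quot.exists_rep (k : Quot (@eRel X (X.δ 0 f) (X.δ 1 f)))
    rw [← hgE] at hk1 hk2
    set fE : EdgeT X (X.δ 1 f) (X.δ 0 f) := ⟨f, rfl, rfl⟩ with hfE
    have hcomp1 : Quot.mk (@eRel X _ _) (compE X fE gE)
        = Quot.mk _ (idE X (X.δ 1 f)) := hk1
    have hcomp2 : Quot.mk (@eRel X _ _) (compE X gE fE)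
        = Quot.mk _ (idE X (X.δ 0 f)) := hk2
    have hr1 : htpy X (compE X fE gE).1 (X.σ 0 (X.δ 1 f)) :=
      ((eRel_equiv X _ _).eqvGen_iff.mp (Quot.eq.mp hcomp1))
    have hr2 : htpy X (compE X gE fE).1 (X.σ 0 (X.δ 0 f)) :=
      ((eRel_equiv X _ _).eqvGen_iff.mp (Quot.eq.mp hcomp2))
    obtain ⟨θ1, t2, t0, t1⟩ := compE_witness X fE gE
    obtain ⟨θ2, u2, u0, u1⟩ := compE_witness X gE fE
    obtain ⟨σs, s2, s0, s1⟩ := change_diag (σ₀ := θ1)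
      (h' := X.σ 0 (X.δ 1 f)) (by rw [t1]; exact hr1)
    obtain ⟨τs, r2, r0, r1⟩ := change_diag (σ₀ := θ2)
      (h' := X.σ 0 (X.δ 0 f)) (by rw [u1]; exact hr2)
    exact ⟨gE.1, σs, τs, gE.2.1, gE.2.2,
      by rw [s2, t2], by rw [s0, t0], s1,
      by rw [r2, u2], by rw [r0, u0], r1⟩

end Main
end Paper

namespace Paper

/-- Let `X` be a quasicategory and `f` a 1-simplex of `X`.  Then `f`
is a quasi-isomorphism if and only if the image of `f` in the homotopy category
`π₀𝔠(X)` is an isomorphism. -/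
theorem statement11 (X : SSet) [SSet.Quasicategory X] (f : X _⦋1⦌) :
    IsQuasiIso f ↔ IsIso (hoMk X f rfl rfl) :=
  statement11' X f

end Paper
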